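/- At any solution x of the n-state problem the constraint matrix is singular: det(N − diag(x)) = 0. -/

import Mathlib

open ComplexOrder

/-- A positive semidefinite complex matrix whose eigenvalues are all at least `ε`
stays positive semidefinite after subtracting `ε • 1`. -/
lemma sub_smul_one_posSemidef {n : ℕ} {M : Matrix (Fin n) (Fin n) ℂ}
    (hM : M.PosSemidef) (ε : ℝ)
    (hε : ∀ i, ε ≤ hM.1.eigenvalues i) :
    (M - (ε : ℂ) • 1).PosSemidef := by
  have hH := hM.1
  set U : Matrix (Fin n) (Fin n) ℂ := (hH.eigenvectorUnitary : Matrix (Fin n) (Fin n) ℂ)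
  have hU : U * star U = 1 := Matrix.mem_unitaryGroup_iff.mp hH.eigenvectorUnitary.2
  have key : M - (ε : ℂ) • 1
      = U * (Matrix.diagonal (fun i => ((hH.eigenvalues i - ε : ℝ) : ℂ))) * star U := by
    have hspec := hH.spectral_theorem
    change M = U * Matrix.diagonal (RCLike.ofReal ∘ hH.eigenvalues) * star U at hspec
    have hdiag : Matrix.diagonal (fun i => ((hH.eigenvalues i - ε : ℝ) : ℂ))
        = Matrix.diagonal (RCLike.ofReal ∘ hH.eigenvalues) - (ε : ℂ) • 1 := by
      ext i j
      by_cases h : i = j <;>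
        simp [Matrix.diagonal, h, Matrix.smul_apply, Matrix.one_apply] <;> push_cast <;> ring
    rw [hdiag, Matrix.mul_sub, Matrix.sub_mul, ← hspec]
    congr 1
    rw [Matrix.mul_smul, Matrix.mul_one, Matrix.smul_mul, hU]
  rw [key]
  have hd : Matrix.PosSemidef
      (Matrix.diagonal (fun i => ((hH.eigenvalues i - ε : ℝ) : ℂ))) := by
    refine Matrix.PosSemidef.diagonal ?_
    intro i
    have := hε i
    simp only [Pi.zero_apply]
    rw [Complex.zero_le_real]
    linarith
  simpa [Matrix.star_eq_conjTranspose] using hd.mul_mul_conjTranspose_same U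

/-- At any solution `x` of the `n`-state problem the constraint matrix is singular:
`det (N - diag x) = 0`. -/
theorem det_eq_zero_at_solution
    (n : ℕ) (hn : 1 ≤ n)
    (N : Matrix (Fin n) (Fin n) ℂ) (hN : N.PosDef) (hNdiag : ∀ i, N i i = 1)
    (η : Fin n → ℝ) (hη : ∀ i, 0 < η i) (hηsum : ∑ i, η i = 1)
    (x : Fin n → ℝ)
    (hx0 : ∀ i, 0 ≤ x i)
    (hxF : (N - Matrix.diagonal (fun i => (x i : ℂ))).PosSemidef)
    (hxOpt : ∀ y : Fin n → ℝ, (∀ i, 0 ≤ y i) →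
      (N - Matrix.diagonal (fun i => (y i : ℂ))).PosSemidef →
      ∑ i, η i * y i ≤ ∑ i, η i * x i) :
    (N - Matrix.diagonal (fun i => (x i : ℂ))).det = 0 := by
  by_contra hdet
  set M := N - Matrix.diagonal (fun i => (x i : ℂ)) with hMdef
  have hH := hxF.1
  -- eigenvalues are positive
  have hpos : ∀ i, 0 < hH.eigenvalues i := by
    intro i
    rcases lt_or_eq_of_le (hxF.eigenvalues_nonneg i) with h | h
    · exact h
    · exfalso
      apply hdet
      rw [hH.det_eq_prod_eigenvalues]
      exact Finset.prod_eq_zero (Finset.mem_univ i) (by simp [← h])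
  have hne : (Finset.univ : Finset (Fin n)).Nonempty := by
    have : Nonempty (Fin n) := ⟨⟨0, hn⟩⟩
    exact Finset.univ_nonempty
  set ε := Finset.univ.inf' hne hH.eigenvalues with hεdef
  have hε0 : 0 < ε := by
    rw [hεdef, Finset.lt_inf'_iff]
    exact fun i _ => hpos i
  have hεle : ∀ i, ε ≤ hH.eigenvalues i := fun i =>
    Finset.inf'_le _ (Finset.mem_univ i)
  have hPSD : (M - (ε : ℂ) • 1).PosSemidef := sub_smul_one_posSemidef hxF ε hεle
  set y : Fin n → ℝ := fun i => x i + ε with hydef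
  have hy0 : ∀ i, 0 ≤ y i := fun i => by
    have := hx0 i; simp only [hydef]; linarith
  have hmat : N - Matrix.diagonal (fun i => (y i : ℂ)) = M - (ε : ℂ) • 1 := by
    rw [hMdef]
    ext i j
    by_cases h : i = j <;>
      simp [Matrix.diagonal, h, Matrix.sub_apply, Matrix.smul_apply, Matrix.one_apply, hydef] <;>
      push_cast <;> ring
  have hle := hxOpt y hy0 (hmat ▸ hPSD)
  have : ∑ i, η i * y i = ∑ i, η i * x i + ε := by
    simp only [hydef, mul_add, Finset.sum_add_distrib, ← Finset.sum_mul, hηsum, one_mul]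
  linarith
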